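/- arXiv:0909.4601 — 5 statements merged into one kernel-verified Lean document; each statement's English description precedes it below -/
import Mathlib

section
/- Let F be a finite field and let Y = [A | y] be an N×(n+m) matrix over F of full rank N, where A is the N×n left part and y the N×m right part. Set μ' = n − rank A and δ' = N − rank A. Then there exist matrices r' ∈ F^{n×m}, L' ∈ F^{n×μ'}, E' ∈ F^{δ'×m} and a subset U ⊆ {0,…,n−1} with |U| = μ' such that: (i) I_U^T r' = 0 (the rows of r' indexed by U are zero), (ii) I_U^T L' = −I_{μ'} (the rows of L' indexed by U, taken in increasing order, form the negative of the μ'×μ' identity matrix), (iii) rank E' = δ', and (iv) the row space of the (n+δ')×(n+m) block matrix [[I_n + L' I_U^T , r'],[0 , E']] equals the row space of Y. -/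
open Matrix

/-- The row space of a matrix: the span of its rows. -/
noncomputable def rowSpace {F : Type*} [Field F] {ι κ : Type*} (M : Matrix ι κ F) :
    Submodule F (κ → F) :=
  Submodule.span F (Set.range fun i => M i)

/-- `matSel F U h` is the matrix `I_U`: the `n × |U|` matrix formed by the columns of the
`n × n` identity matrix indexed by `U`, in increasing order. -/
def matSel (F : Type*) [Zero F] [One F] {n μ : ℕ} (U : Finset (Fin n)) (h : U.card = μ) :
    Matrix (Fin n) (Fin μ) F :=
  Matrix.of fun i j => if i = U.orderEmbOfFin h j then 1 else 0

section Aux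
open Submodule
set_option maxHeartbeats 1000000

lemma coord_eq_zero_of_mem_span {F : Type*} [Field F] {n : ℕ} (U : Finset (Fin n))
    {x : Fin n → F} (hx : x ∈ Submodule.span F ((fun u => Pi.single u (1:F)) '' ↑U))
    {k : Fin n} (hk : k ∉ U) : x k = 0 := by
  induction hx using Submodule.span_induction with
  | mem y h =>
    obtain ⟨u, hu, rfl⟩ := h
    refine Pi.single_eq_of_ne (fun h => hk ?_) 1
    subst h; simpa using hu
  | zero => rfl
  | add y z _ _ hy hz => simp [hy, hz]
  | smul c y _ hy => simp [hy]

lemma li_single {F : Type*} [Field F] {n : ℕ} :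
    LinearIndependent F (fun i : Fin n => Pi.single i (1:F)) := by
  have : ⇑(Pi.basisFun F (Fin n)) = fun i : Fin n => Pi.single i (1:F) := by
    funext i; exact Pi.basisFun_apply F (Fin n) i
  rw [← this]; exact (Pi.basisFun F (Fin n)).linearIndependent

lemma finrank_span_single_image {F : Type*} [Field F] {n : ℕ} (U : Finset (Fin n)) :
    Module.finrank F (Submodule.span F
      ((fun u => Pi.single u (1:F)) '' (U : Set (Fin n)))) = U.card := by
  have hli := (li_single (F := F) (n := n)).comp
      (fun u : {x : Fin n // x ∈ (↑U : Set (Fin n))} => (u : Fin n)) Subtype.val_injective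
  have h1 : (fun u => Pi.single u (1:F)) '' (U : Set (Fin n)) =
      Set.range ((fun i : Fin n => Pi.single i (1:F)) ∘
        (fun u : {x : Fin n // x ∈ (↑U : Set (Fin n))} => (u : Fin n))) := by
    rw [Set.range_comp, Subtype.range_coe]
  rw [h1, finrank_span_eq_card hli]
  simp [Fintype.card_coe]

lemma span_single_top {F : Type*} [Field F] {n : ℕ} :
    Submodule.span F (Set.range fun i : Fin n => Pi.single i (1:F)) = ⊤ := by
  have : ⇑(Pi.basisFun F (Fin n)) = fun i : Fin n => Pi.single i (1:F) := by
    funext i; exact Pi.basisFun_apply F (Fin n) i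
  rw [← this]; exact (Pi.basisFun F (Fin n)).span_eq

/-- Existence of a standard-basis complement of a submodule of `Fⁿ`. -/
lemma exists_std_compl {F : Type*} [Field F] {n : ℕ} (RA : Submodule F (Fin n → F)) :
    ∃ U : Finset (Fin n), U.card = n - Module.finrank F RA ∧
      IsCompl RA (Submodule.span F ((fun u => Pi.single u (1:F)) '' ↑U)) := by
  classical
  set bRA := Module.finBasis F RA with hbRA
  set s : Set (Fin n → F) := Set.range (fun i => (bRA i : Fin n → F)) with hs_def
  have hs_li : LinearIndependent F ((↑) : s → (Fin n → F)) := by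
    have : LinearIndependent F (fun i => (bRA i : Fin n → F)) :=
      bRA.linearIndependent.map' RA.subtype (Submodule.ker_subtype RA)
    exact (linearIndepOn_id_range_iff this.injective).mpr this
  have hs_span : Submodule.span F s = RA := by
    rw [hs_def]
    have : (fun i => (bRA i : Fin n → F)) = RA.subtype ∘ bRA := rfl
    rw [this, Set.range_comp, Submodule.span_image, bRA.span_eq, Submodule.map_subtype_top]
  set t : Set (Fin n → F) := s ∪ Set.range (fun i : Fin n => Pi.single i (1:F)) with ht_def
  have hst : s ⊆ t := Set.subset_union_left
  have hs_li' : LinearIndepOn F id s := hs_li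
  set b := hs_li'.extend hst with hb_def
  have hbt : b ⊆ t := hs_li'.extend_subset hst
  have hsb : s ⊆ b := hs_li'.subset_extend hst
  have hb_li : LinearIndependent F ((↑) : b → (Fin n → F)) := hs_li'.linearIndepOn_extend hst
  have hb_span : Submodule.span F b = ⊤ := by
    rw [hs_li'.span_extend_eq_span hst]
    refine top_unique ?_
    rw [← span_single_top (F := F) (n := n)]
    exact Submodule.span_mono Set.subset_union_right
  set U : Finset (Fin n) := Finset.univ.filter (fun u => Pi.single u (1:F) ∈ b \ s) with hU_def
  have himg : (fun u => Pi.single u (1:F)) '' ↑U = b \ s := by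
    apply Set.Subset.antisymm
    · rintro x ⟨u, hu, rfl⟩
      simp only [hU_def, Finset.coe_filter, Set.mem_setOf_eq, Finset.mem_univ, true_and] at hu
      exact hu
    · intro x hx
      have hxt : x ∈ t := hbt hx.1
      rcases hxt with h | ⟨u, rfl⟩
      · exact absurd h hx.2
      · exact ⟨u, by simpa [hU_def] using hx, rfl⟩
  have hcompl : IsCompl RA (Submodule.span F ((fun u => Pi.single u (1:F)) '' ↑U)) := by
    rw [himg]
    constructor
    · rw [← hs_span]
      have hd := hb_li.disjoint_span_image (s := {x : b | (x : Fin n → F) ∈ s})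
        (t := {x : b | (x : Fin n → F) ∈ s}ᶜ) disjoint_compl_right
      have h1 : Subtype.val '' {x : b | (x : Fin n → F) ∈ s} = s := by
        apply Set.Subset.antisymm
        · rintro y ⟨⟨y, hyb⟩, hy, rfl⟩; exact hy
        · intro y hy; exact ⟨⟨y, hsb hy⟩, hy, rfl⟩
      have h2 : Subtype.val '' ({x : b | (x : Fin n → F) ∈ s}ᶜ) = b \ s := by
        apply Set.Subset.antisymm
        · rintro y ⟨⟨y, hyb⟩, hy, rfl⟩; exact ⟨hyb, hy⟩
        · rintro y ⟨hyb, hys⟩; exact ⟨⟨y, hyb⟩, hys, rfl⟩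
      rwa [h1, h2] at hd
    · rw [codisjoint_iff, ← hs_span, ← Submodule.span_union,
        Set.union_diff_cancel hsb, hb_span]
  refine ⟨U, ?_, hcompl⟩
  have hE_rank := finrank_span_single_image (F := F) U
  have hsum := Submodule.finrank_add_eq_of_isCompl hcompl
  rw [hE_rank] at hsum
  have hn : Module.finrank F (Fin n → F) = n := by simp
  rw [hn] at hsum
  have hle : Module.finrank F RA ≤ n := by omega
  omega

end Aux

set_option maxHeartbeats 1000000 in
theorem stmt0 {F : Type*} [Field F] [Fintype F] {N n m : ℕ}
    (Y : Matrix (Fin N) (Fin n ⊕ Fin m) F) (hY : Y.rank = N)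
    (A : Matrix (Fin N) (Fin n) F) (hA : A = Y.submatrix id Sum.inl) :
    ∃ (U : Finset (Fin n)) (hU : U.card = n - A.rank)
      (r' : Matrix (Fin n) (Fin m) F)
      (L' : Matrix (Fin n) (Fin (n - A.rank)) F)
      (E' : Matrix (Fin (N - A.rank)) (Fin m) F),
      (matSel F U hU)ᵀ * r' = 0 ∧
      (matSel F U hU)ᵀ * L' = -1 ∧
      E'.rank = N - A.rank ∧
      rowSpace (Matrix.fromBlocks (1 + L' * (matSel F U hU)ᵀ) r' 0 E') = rowSpace Y := by
  classical
  -- the row space of Y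
  set V : Submodule F (Fin n ⊕ Fin m → F) := Submodule.span F (Set.range fun i => Y i)
    with hV_def
  have hV_rank : Module.finrank F V = N := by
    have h0 : (Set.range fun i => Y i) = Set.range Y.row := rfl
    rw [hV_def, h0, ← Matrix.rank_eq_finrank_span_row, hY]
  -- the row space of A
  set RA : Submodule F (Fin n → F) := Submodule.span F (Set.range fun i => A i) with hRA_def
  have hRA_rank : Module.finrank F RA = A.rank := by
    have h0 : (Set.range fun i => A i) = Set.range A.row := rfl
    rw [hRA_def, h0, ← Matrix.rank_eq_finrank_span_row]
  -- the set U and the complement E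
  obtain ⟨U, hU0, hcompl⟩ := exists_std_compl RA
  have hU : U.card = n - A.rank := by rw [hU0, hRA_rank]
  set E : Submodule F (Fin n → F) :=
    Submodule.span F ((fun u => Pi.single u (1:F)) '' ↑U) with hE_def
  -- the projection π onto the first n coordinates
  set π : (Fin n ⊕ Fin m → F) →ₗ[F] (Fin n → F) := LinearMap.funLeft F F Sum.inl with hπ_def
  have hπY : ∀ i, π (Y i) = A i := by
    intro i; funext j
    simp [hπ_def, LinearMap.funLeft_apply, hA, Matrix.submatrix_apply]
  set g : V →ₗ[F] (Fin n → F) := π.domRestrict V with hg_def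
  have hg_range : LinearMap.range g = RA := by
    have hcomp : (⇑π ∘ fun i => Y i) = fun i => A i := funext hπY
    rw [hg_def, LinearMap.range_domRestrict, hV_def, Submodule.map_span, hRA_def,
      ← Set.range_comp, hcomp]
  have hmem : ∀ x : V, g x ∈ RA := fun x => hg_range ▸ LinearMap.mem_range_self g x
  set f : V →ₗ[F] RA := g.codRestrict RA hmem with hf_def
  have hf_surj : LinearMap.range f = ⊤ := by
    rw [LinearMap.range_eq_top]
    rintro ⟨y, hy⟩
    rw [← hg_range] at hy
    obtain ⟨x, hx⟩ := hy
    exact ⟨x, Subtype.ext hx⟩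
  obtain ⟨φ, hφ⟩ := f.exists_rightInverse_of_surjective hf_surj
  have hfφ : ∀ x : RA, f (φ x) = x := fun x => DFunLike.congr_fun hφ x
  set q := Submodule.linearProjOfIsCompl RA E hcompl with hq_def
  set topRow : Fin n → (Fin n ⊕ Fin m → F) :=
    fun i => ((φ (q (Pi.single i 1)) : V) : Fin n ⊕ Fin m → F) with htopRow
  have htop_coord : ∀ i k, topRow i (Sum.inl k) = (q (Pi.single i 1) : Fin n → F) k := by
    intro i k
    calc topRow i (Sum.inl k) = ((f (φ (q (Pi.single i 1))) : Fin n → F)) k := rfl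
      _ = _ := by rw [hfφ]
  have hq_zero : ∀ u ∈ U, q (Pi.single u (1:F)) = 0 := fun u hu =>
    Submodule.projectionOnto_apply_of_mem_right hcompl
      (Submodule.subset_span ⟨u, hu, rfl⟩)
  have hq_coord : ∀ (i k : Fin n), k ∉ U →
      (q (Pi.single i 1) : Fin n → F) k = (Pi.single i (1:F) : Fin n → F) k := by
    intro i k hk
    obtain ⟨y, hy, z, hz, hyz⟩ := Submodule.mem_sup.mp
      (by rw [codisjoint_iff.mp hcompl.codisjoint]; trivial :
        Pi.single i (1:F) ∈ RA ⊔ E)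
    have h1 : q (Pi.single i (1:F)) = ⟨y, hy⟩ := by
      rw [← hyz, map_add, (show q z = 0 from Submodule.projectionOnto_apply_of_mem_right hcompl hz),
        add_zero]
      exact Submodule.linearProjOfIsCompl_apply_left hcompl ⟨y, hy⟩
    have h2 : z k = 0 := coord_eq_zero_of_mem_span U hz hk
    rw [h1, ← hyz]
    simp [h2]
  -- the selected indices
  have hu_mem : ∀ j, U.orderEmbOfFin hU j ∈ U := fun j => U.orderEmbOfFin_mem hU j
  have hu_inj : Function.Injective (U.orderEmbOfFin hU) := (U.orderEmbOfFin hU).injective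
  have hu_surj : ∀ k ∈ U, ∃ j, U.orderEmbOfFin hU j = k := by
    intro k hk
    have h := U.range_orderEmbOfFin hU
    rw [Set.ext_iff] at h
    exact (h k).2 hk
  -- the matrices
  set r' : Matrix (Fin n) (Fin m) F := Matrix.of fun i j => topRow i (Sum.inr j) with hr'_def
  set L' : Matrix (Fin n) (Fin (n - A.rank)) F :=
    Matrix.of fun i j => (q (Pi.single i (1:F)) : Fin n → F) (U.orderEmbOfFin hU j)
      - (if i = U.orderEmbOfFin hU j then 1 else 0) with hL'_def
  have hmulsel : ∀ {α : Type} [Fintype α] (M : Matrix (Fin n) α F) (j) (k : α),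
      ((matSel F U hU)ᵀ * M) j k = M (U.orderEmbOfFin hU j) k := by
    intro α _ M j k
    rw [Matrix.mul_apply]
    rw [Finset.sum_eq_single (U.orderEmbOfFin hU j)]
    · simp [matSel, Matrix.transpose_apply]
    · intro i _ hi
      simp [matSel, Matrix.transpose_apply, hi]
    · simp
  -- the kernel W and its basis
  set W : Submodule F (Fin n ⊕ Fin m → F) := LinearMap.ker π ⊓ V with hW_def
  have hW_rank : Module.finrank F W = N - A.rank := by
    have h1 := LinearMap.finrank_range_add_finrank_ker g
    rw [hg_range, hRA_rank, hV_rank] at h1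
    have h2 : LinearMap.ker g = Submodule.comap V.subtype W := by
      rw [hg_def, LinearMap.ker_domRestrict, hW_def, Submodule.comap_inf,
        Submodule.comap_subtype_self, inf_top_eq]
    have h3 : Module.finrank F (LinearMap.ker g) = Module.finrank F W := by
      rw [h2]; exact (Submodule.comapSubtypeEquivOfLe inf_le_right).finrank_eq
    have hAle : A.rank ≤ N := le_trans (Matrix.rank_le_card_height A) (by simp)
    omega
  set κ : Module.Basis (Fin (N - A.rank)) F W := Module.finBasisOfFinrankEq F W hW_rank with hκ_def
  set E' : Matrix (Fin (N - A.rank)) (Fin m) F :=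
    Matrix.of fun k j => ((κ k : Fin n ⊕ Fin m → F)) (Sum.inr j) with hE'_def
  set ψ : (Fin n ⊕ Fin m → F) →ₗ[F] (Fin m → F) := LinearMap.funLeft F F Sum.inr with hψ_def
  have hWl : ∀ x : W, ∀ j, (x : Fin n ⊕ Fin m → F) (Sum.inl j) = 0 := by
    intro x j
    have hx : (x : Fin n ⊕ Fin m → F) ∈ LinearMap.ker π := (Submodule.mem_inf.mp x.2).1
    exact congrFun (LinearMap.mem_ker.mp hx) j
  have hE'_li : LinearIndependent F (fun k => E' k) := by
    have hker : LinearMap.ker (ψ ∘ₗ W.subtype) = ⊥ := by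
      rw [LinearMap.ker_eq_bot']
      intro x hx
      apply Subtype.ext
      funext jj
      cases jj with
      | inl j => exact hWl x j
      | inr j => exact congrFun hx j
    exact κ.linearIndependent.map' (ψ ∘ₗ W.subtype) hker
  have hE'_rank : E'.rank = N - A.rank := by
    have h1 : Module.finrank F (Submodule.span F (Set.range E'.row))
        = Fintype.card (Fin (N - A.rank)) := finrank_span_eq_card hE'_li
    rw [Matrix.rank_eq_finrank_span_row, h1, Fintype.card_fin]
  refine ⟨U, hU, r', L', E', ?_, ?_, hE'_rank, ?_⟩
  · ext j k
    rw [hmulsel]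
    show topRow (U.orderEmbOfFin hU j) (Sum.inr k) = (0 : Matrix _ _ F) j k
    rw [htopRow]
    simp [hq_zero _ (hu_mem j)]
  · ext j j'
    rw [hmulsel]
    show (q (Pi.single (U.orderEmbOfFin hU j) (1:F)) : Fin n → F) (U.orderEmbOfFin hU j') - _
      = (-1 : Matrix _ _ F) j j'
    rw [hq_zero _ (hu_mem j)]
    simp [Matrix.one_apply, hu_inj.eq_iff]
  · -- row space equality
    have hB_row : ∀ i, (Matrix.fromBlocks (1 + L' * (matSel F U hU)ᵀ) r' 0 E') (Sum.inl i)
        = topRow i := by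
      intro i; funext jj
      cases jj with
      | inr k => rw [Matrix.fromBlocks_apply₁₂]; rfl
      | inl k =>
        rw [Matrix.fromBlocks_apply₁₁, htop_coord i k, Matrix.add_apply, Matrix.mul_apply,
          Matrix.one_apply]
        by_cases hk : k ∈ U
        · obtain ⟨j₀, hj₀⟩ := hu_surj k hk
          subst hj₀
          rw [Finset.sum_eq_single j₀ (fun j _ hj => by
              have hne : U.orderEmbOfFin hU j₀ ≠ U.orderEmbOfFin hU j :=
                fun h => hj (hu_inj h.symm)
              simp [matSel, Matrix.transpose_apply, hne])
            (fun h => absurd (Finset.mem_univ j₀) h)]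
          simp [hL'_def, matSel, Matrix.transpose_apply]
        · have hz : ∀ j ∈ Finset.univ, L' i j * (matSel F U hU)ᵀ j k = 0 := fun j _ => by
            have hne : k ≠ U.orderEmbOfFin hU j := fun h => hk (h ▸ hu_mem j)
            simp [matSel, Matrix.transpose_apply, hne]
          rw [Finset.sum_congr rfl hz, Finset.sum_const_zero, add_zero, hq_coord i k hk]
          simp [Pi.single_apply, eq_comm]
    have hκ_row : ∀ k, (Matrix.fromBlocks (1 + L' * (matSel F U hU)ᵀ) r' 0 E') (Sum.inr k)
        = ((κ k : Fin n ⊕ Fin m → F)) := by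
      intro k; funext jj
      cases jj with
      | inl j => simp [Matrix.fromBlocks_apply₂₁, hWl (κ k) j]
      | inr j => rw [Matrix.fromBlocks_apply₂₂]; rfl
    have hrows : (fun i => (Matrix.fromBlocks (1 + L' * (matSel F U hU)ᵀ) r' 0 E') i)
        = Sum.elim topRow (fun k => ((κ k : Fin n ⊕ Fin m → F))) := by
      funext i
      cases i with
      | inl i => exact hB_row i
      | inr k => exact hκ_row k
    show Submodule.span F (Set.range fun i =>
        (Matrix.fromBlocks (1 + L' * (matSel F U hU)ᵀ) r' 0 E') i) = V
    rw [hrows, Set.Sum.elim_range, Submodule.span_union]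
    have hWspan : Submodule.span F (Set.range fun k => ((κ k : Fin n ⊕ Fin m → F))) = W := by
      have h0 : (fun k => ((κ k : Fin n ⊕ Fin m → F))) = W.subtype ∘ ⇑κ := rfl
      rw [h0, Set.range_comp, ← Submodule.map_span, κ.span_eq, Submodule.map_subtype_top]
    apply le_antisymm
    · apply sup_le
      · rw [Submodule.span_le]
        rintro x ⟨i, rfl⟩
        exact (φ (q (Pi.single i 1))).2
      · rw [hWspan, hW_def]
        exact inf_le_right
    · show Submodule.span F (Set.range fun i => Y i) ≤ _
      rw [Submodule.span_le]
      rintro x ⟨i, rfl⟩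
      have hAmem : A i ∈ RA := Submodule.subset_span ⟨i, rfl⟩
      have hq_Ai : ((q (A i)) : Fin n → F) = A i :=
        congrArg Subtype.val (Submodule.linearProjOfIsCompl_apply_left hcompl ⟨A i, hAmem⟩)
      have hAsum : A i = ∑ k, A i k • (Pi.single k (1:F) : Fin n → F) := by
        funext l
        rw [Finset.sum_apply]
        simp [Pi.single_apply]
      have h1 : q (A i) = ∑ k, A i k • q (Pi.single k (1:F)) := by
        conv_lhs => rw [hAsum]
        rw [map_sum]
        simp [_root_.map_smul]
      have h2 : φ (q (A i)) = ∑ k, A i k • φ (q (Pi.single k (1:F))) := by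
        rw [h1, map_sum]
        simp [_root_.map_smul]
      have h3 : ((φ (q (A i)) : V) : Fin n ⊕ Fin m → F) = ∑ k, A i k • topRow k := by
        rw [h2]
        simp [htopRow]
      have hmem1 : ((φ (q (A i)) : V) : Fin n ⊕ Fin m → F) ∈
          Submodule.span F (Set.range topRow) := by
        rw [h3]
        exact Submodule.sum_mem _ fun k _ =>
          Submodule.smul_mem _ _ (Submodule.subset_span ⟨k, rfl⟩)
      have hmem2 : Y i - ((φ (q (A i)) : V) : Fin n ⊕ Fin m → F) ∈
          Submodule.span F (Set.range fun k => ((κ k : Fin n ⊕ Fin m → F))) := by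
        rw [hWspan, hW_def]
        refine Submodule.mem_inf.mpr ⟨?_, ?_⟩
        · rw [LinearMap.mem_ker, map_sub]
          have hπtop : π ((φ (q (A i)) : V) : Fin n ⊕ Fin m → F)
              = ((q (A i)) : Fin n → F) := by
            calc π ((φ (q (A i)) : V) : Fin n ⊕ Fin m → F)
                = ((f (φ (q (A i))) : Fin n → F)) := rfl
              _ = _ := by rw [hfφ]
          rw [hπY i, hπtop, hq_Ai, sub_self]
        · exact sub_mem (Submodule.subset_span ⟨i, rfl⟩) (φ (q (A i))).2
      have hsplit : Y i = ((φ (q (A i)) : V) : Fin n ⊕ Fin m → F)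
          + (Y i - ((φ (q (A i)) : V) : Fin n ⊕ Fin m → F)) := by abel
      have hfinal := Submodule.add_mem _ (Submodule.mem_sup_left hmem1)
        (Submodule.mem_sup_right hmem2)
      rw [← hsplit] at hfinal
      exact hfinal
end

section
/- Let F be a finite field, let Y be an N×(n+m) matrix over F, and suppose (r', L', E', U) with r' ∈ F^{n×m}, L' ∈ F^{n×μ'}, E' ∈ F^{δ'×m}, U ⊆ {0,…,n−1}, |U| = μ', satisfies I_U^T r' = 0, I_U^T L' = −I_{μ'}, rank E' = δ', and the row space of [[I_n + L' I_U^T , r'],[0 , E']] equals the row space of Y. Then for every x ∈ F^{n×m}, with X = [I_n | x] the n×(n+m) matrix obtained by concatenating the identity I_n and x, the subspace distance between the row space of X and the row space of Y equals 2·rank[[L' , r'−x],[0 , E']] − μ' − δ'. -/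
open Matrix

/-- The subspace distance `d_S(U, V) = dim U + dim V − 2 dim (U ⊓ V)`. -/
noncomputable def subDist {F : Type*} [Field F] {ι : Type*} (U V : Submodule F (ι → F)) : ℤ :=
  (Module.finrank F U : ℤ) + (Module.finrank F V : ℤ)
    - 2 * (Module.finrank F ↥(U ⊓ V) : ℤ)

namespace StmtAux
open Module Submodule
variable {F : Type*} [Field F]

lemma rowSpace_eq_range {ι κ : Type*} [Fintype ι] (M : Matrix ι κ F) :
    rowSpace M = LinearMap.range M.vecMulLinear := by
  rw [rowSpace, range_vecMulLinear]; rfl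

lemma mem_rowSpace_iff {ι κ : Type*} [Fintype ι] {M : Matrix ι κ F} {v : κ → F} :
    v ∈ rowSpace M ↔ ∃ c, c ᵥ* M = v := by
  simp [rowSpace_eq_range, LinearMap.mem_range, Matrix.vecMulLinear_apply]

lemma rowSpace_mul {ι κ κ' : Type*} [Fintype ι] [Fintype κ] (M : Matrix ι κ F)
    (V : Matrix κ κ' F) :
    rowSpace (M * V) = (rowSpace M).map V.vecMulLinear := by
  rw [rowSpace_eq_range, rowSpace_eq_range, ← LinearMap.range_comp]
  congr 1
  apply LinearMap.ext
  intro v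
  simp [Matrix.vecMulLinear_apply, Matrix.vecMul_vecMul]

lemma rowSpace_mul_le {ι ι' κ : Type*} [Fintype ι] [Fintype ι'] (A : Matrix ι' ι F)
    (M : Matrix ι κ F) : rowSpace (A * M) ≤ rowSpace M := by
  rw [rowSpace_mul, rowSpace_eq_range M]
  exact LinearMap.map_le_range

lemma rowSpace_zero {ι κ : Type*} [Fintype ι] : rowSpace (0 : Matrix ι κ F) = ⊥ := by
  rw [rowSpace_eq_range, LinearMap.range_eq_bot]
  apply LinearMap.ext
  intro v
  simp [Matrix.vecMulLinear_apply]

lemma rowSpace_fromRows {ι₁ ι₂ κ : Type*} (A : Matrix ι₁ κ F) (B : Matrix ι₂ κ F) :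
    rowSpace (fromRows A B) = rowSpace A ⊔ rowSpace B := by
  rw [rowSpace, rowSpace, rowSpace, ← Submodule.span_union, ← Set.Sum.elim_range]
  rfl

lemma rowSpace_eq_top {κ κ' : Type*} [Fintype κ] [Fintype κ'] [DecidableEq κ'] (V : Matrix κ κ' F)
    (W : Matrix κ' κ F) (hWV : W * V = 1) : rowSpace V = ⊤ := by
  rw [rowSpace_eq_range, LinearMap.range_eq_top]
  intro w
  exact ⟨w ᵥ* W, by simp [Matrix.vecMulLinear_apply, Matrix.vecMul_vecMul, hWV]⟩

lemma finrank_eq_inf_ker_add_map {V W : Type*} [AddCommGroup V] [Module F V]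
    [AddCommGroup W] [Module F W] [FiniteDimensional F V]
    (φ : V →ₗ[F] W) (p : Submodule F V) :
    finrank F p = finrank F ↥(p ⊓ LinearMap.ker φ) + finrank F ↥(p.map φ) := by
  have h := LinearMap.finrank_range_add_finrank_ker (φ.domRestrict p)
  rw [LinearMap.range_domRestrict, LinearMap.ker_domRestrict] at h
  have e : ↥((LinearMap.ker φ).comap p.subtype) ≃ₗ[F] ↥(p ⊓ LinearMap.ker φ) := by
    rw [show (LinearMap.ker φ).comap p.subtype = (p ⊓ LinearMap.ker φ).comap p.subtype by
      rw [Submodule.comap_inf, Submodule.comap_subtype_self, top_inf_eq]]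
    exact Submodule.comapSubtypeEquivOfLe inf_le_left
  rw [← h, e.finrank_eq]
  ring

lemma finrank_eq_ker_add_map {V W : Type*} [AddCommGroup V] [Module F V]
    [AddCommGroup W] [Module F W] [FiniteDimensional F V]
    (φ : V →ₗ[F] W) (p : Submodule F V) (h : LinearMap.ker φ ≤ p) :
    finrank F p = finrank F (LinearMap.ker φ) + finrank F ↥(p.map φ) := by
  rw [finrank_eq_inf_ker_add_map φ p, inf_eq_right.mpr h]

lemma finrank_rowSpace_mul_eq {ι κ κ' : Type*} [Fintype ι] [Fintype κ] [Fintype κ'] [DecidableEq κ]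
    (M : Matrix ι κ F) (V : Matrix κ κ' F) (W : Matrix κ' κ F) (hVW : V * W = 1) :
    finrank F (rowSpace (M * V)) = finrank F (rowSpace M) := by
  rw [rowSpace_mul]
  have hinj : Function.Injective V.vecMulLinear := by
    intro a b hab
    have h1 : a ᵥ* V = b ᵥ* V := hab
    have : a ᵥ* V ᵥ* W = b ᵥ* V ᵥ* W := by rw [h1]
    simpa [Matrix.vecMul_vecMul, hVW] using this
  exact ((Submodule.equivMapOfInjective _ hinj _).finrank_eq).symm

lemma finrank_sup_fromCols_one {n m : ℕ} {ι : Type*} [Fintype ι]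
    (x : Matrix (Fin n) (Fin m) F) (A : Matrix ι (Fin n ⊕ Fin m) F) :
    finrank F ↥(rowSpace (fromCols (1 : Matrix (Fin n) (Fin n) F) x) ⊔ rowSpace A)
      = n + finrank F
        (rowSpace (A * fromRows (-x) (1 : Matrix (Fin m) (Fin m) F))) := by
  set J : Matrix (Fin n ⊕ Fin m) (Fin m) F := fromRows (-x) 1 with hJ
  have hker : LinearMap.ker J.vecMulLinear
      ≤ rowSpace (fromCols (1 : Matrix (Fin n) (Fin n) F) x) := by
    intro v hv
    rw [LinearMap.mem_ker, Matrix.vecMulLinear_apply] at hv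
    have hv' : (v ∘ Sum.inl) ᵥ* (-x) + (v ∘ Sum.inr) ᵥ* (1 : Matrix (Fin m) (Fin m) F) = 0 := by
      rw [← Matrix.sumElim_vecMul_fromRows, Sum.elim_comp_inl_inr]
      exact hv
    rw [Matrix.vecMul_neg, Matrix.vecMul_one] at hv'
    have hvr : v ∘ Sum.inr = (v ∘ Sum.inl) ᵥ* x := (neg_add_eq_zero.mp hv').symm
    rw [mem_rowSpace_iff]
    refine ⟨v ∘ Sum.inl, ?_⟩
    rw [Matrix.vecMul_fromCols, Matrix.vecMul_one, ← hvr]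
    exact Sum.elim_comp_inl_inr v
  have hXJ : fromCols (1 : Matrix (Fin n) (Fin n) F) x * J = 0 := by
    rw [hJ, Matrix.fromCols_mul_fromRows, Matrix.one_mul, Matrix.mul_one]
    simp
  have hkerrank : finrank F (LinearMap.ker J.vecMulLinear) = n := by
    have h1 := LinearMap.finrank_range_add_finrank_ker J.vecMulLinear
    rw [← rowSpace_eq_range, rowSpace_eq_top J (fromCols 0 1) (by
        rw [hJ, Matrix.fromCols_mul_fromRows]; simp), finrank_top,
      Module.finrank_fintype_fun_eq_card, Module.finrank_fintype_fun_eq_card] at h1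
    simp only [Fintype.card_sum, Fintype.card_fin] at h1
    omega
  rw [finrank_eq_ker_add_map J.vecMulLinear _ (le_trans hker le_sup_left),
    Submodule.map_sup, ← rowSpace_mul, ← rowSpace_mul, hXJ, rowSpace_zero, bot_sup_eq,
    hkerrank]

lemma finrank_rowSpace_fromBlocks {n m μ δ : ℕ}
    (L : Matrix (Fin n) (Fin μ) F) (T : Matrix (Fin n) (Fin m) F)
    (E : Matrix (Fin δ) (Fin m) F) (S : Matrix (Fin n) (Fin μ) F)
    (hSL : Sᵀ * L = -1) (hST : Sᵀ * T = 0) :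
    finrank F (rowSpace (fromBlocks L T 0 E))
      = μ + finrank F (rowSpace (fromRows T E)) := by
  set Q : Matrix (Fin μ ⊕ Fin m) (Fin m) F := fromRows 0 1 with hQ
  have hker : LinearMap.ker Q.vecMulLinear ≤ rowSpace (fromBlocks L T 0 E) := by
    intro v hv
    rw [LinearMap.mem_ker, Matrix.vecMulLinear_apply] at hv
    have hv2 : v ∘ Sum.inr = 0 := by
      have h0 : (v ∘ Sum.inl) ᵥ* (0 : Matrix (Fin μ) (Fin m) F)
          + (v ∘ Sum.inr) ᵥ* (1 : Matrix (Fin m) (Fin m) F) = 0 := by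
        rw [← Matrix.sumElim_vecMul_fromRows, Sum.elim_comp_inl_inr]
        exact hv
      simpa using h0
    rw [mem_rowSpace_iff]
    refine ⟨Sum.elim (-((v ∘ Sum.inl) ᵥ* Sᵀ)) 0, ?_⟩
    rw [Matrix.vecMul_fromBlocks]
    simp only [Sum.elim_comp_inl, Sum.elim_comp_inr]
    rw [show -((v ∘ Sum.inl) ᵥ* Sᵀ) ᵥ* L + (0 : Fin δ → F) ᵥ* (0 : Matrix (Fin δ) (Fin μ) F)
          = v ∘ Sum.inl by
        rw [Matrix.neg_vecMul, Matrix.vecMul_vecMul, hSL, Matrix.vecMul_neg,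
          Matrix.vecMul_one, neg_neg, Matrix.zero_vecMul, add_zero],
      show -((v ∘ Sum.inl) ᵥ* Sᵀ) ᵥ* T + (0 : Fin δ → F) ᵥ* E = 0 by
        rw [Matrix.neg_vecMul, Matrix.vecMul_vecMul, hST, Matrix.vecMul_zero, neg_zero,
          Matrix.zero_vecMul, add_zero]]
    conv_rhs => rw [← Sum.elim_comp_inl_inr v]
    rw [hv2]
  have hkerrank : finrank F (LinearMap.ker Q.vecMulLinear) = μ := by
    have h1 := LinearMap.finrank_range_add_finrank_ker Q.vecMulLinear
    rw [← rowSpace_eq_range, rowSpace_eq_top Q (fromCols 0 1) (by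
        rw [hQ, Matrix.fromCols_mul_fromRows]; simp), finrank_top,
      Module.finrank_fintype_fun_eq_card, Module.finrank_fintype_fun_eq_card] at h1
    simp only [Fintype.card_sum, Fintype.card_fin] at h1
    omega
  have hmul : fromBlocks L T 0 E * Q = fromRows T E := by
    rw [hQ, Matrix.fromBlocks_mul_fromRows]
    simp
  rw [finrank_eq_ker_add_map Q.vecMulLinear _ hker, ← rowSpace_mul, hmul, hkerrank]

lemma finrank_rowSpace_proj {n μ ν : ℕ}
    (P : Matrix (Fin n) (Fin n) F) (S : Matrix (Fin n) (Fin μ) F) (S2 : Matrix (Fin n) (Fin ν) F)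
    (hres : S * Sᵀ + S2 * S2ᵀ = 1) (hS2S2 : S2ᵀ * S2 = 1)
    (hSP : Sᵀ * P = 0) (hPP : P * P = P) (hPS2 : P * S2 = S2) :
    finrank F (rowSpace P) = ν := by
  have h := finrank_eq_inf_ker_add_map S2.vecMulLinear (rowSpace P)
  have hinf : rowSpace P ⊓ LinearMap.ker S2.vecMulLinear = ⊥ := by
    rw [eq_bot_iff]
    intro v hv
    rw [Submodule.mem_inf] at hv
    obtain ⟨hv1, hv2⟩ := hv
    obtain ⟨c, hc⟩ := mem_rowSpace_iff.mp hv1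
    rw [LinearMap.mem_ker, Matrix.vecMulLinear_apply] at hv2
    have hvP : v ᵥ* P = v := by rw [← hc, Matrix.vecMul_vecMul, hPP]
    have hv' : v = (v ᵥ* S) ᵥ* Sᵀ := by
      conv_lhs => rw [← Matrix.vecMul_one v, ← hres]
      rw [Matrix.vecMul_add, ← Matrix.vecMul_vecMul, ← Matrix.vecMul_vecMul, hv2,
        Matrix.zero_vecMul, add_zero]
    have hz : v = ((v ᵥ* S) ᵥ* Sᵀ) ᵥ* P := by rw [← hv']; exact hvP.symm
    rw [Matrix.vecMul_vecMul, hSP, Matrix.vecMul_zero] at hz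
    rw [Submodule.mem_bot]
    exact hz
  rw [hinf, finrank_bot, zero_add] at h
  rw [h, ← rowSpace_mul, hPS2, rowSpace_eq_top S2 S2ᵀ hS2S2, finrank_top,
    Module.finrank_fintype_fun_eq_card, Fintype.card_fin]


variable {F : Type*} [Field F]

lemma matSel_tmul_disjoint {n μ ν : ℕ} (U V : Finset (Fin n)) (hU : U.card = μ)
    (hV : V.card = ν) (hd : ∀ i, i ∈ U → i ∉ V) :
    (matSel F U hU)ᵀ * matSel F V hV = 0 := by
  ext j k
  simp only [Matrix.mul_apply, transpose_apply, matSel, of_apply, Matrix.zero_apply]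
  refine Finset.sum_eq_zero fun i _ => ?_
  by_cases h1 : i = U.orderEmbOfFin hU j
  · by_cases h2 : i = V.orderEmbOfFin hV k
    · exfalso
      refine hd (U.orderEmbOfFin hU j) (Finset.orderEmbOfFin_mem U hU j) ?_
      rw [← h1, h2]
      exact Finset.orderEmbOfFin_mem V hV k
    · subst h1
      simp [h2]
  · simp [h1]

lemma matSel_tmul_self {n μ : ℕ} (U : Finset (Fin n)) (hU : U.card = μ) :
    (matSel F U hU)ᵀ * matSel F U hU = 1 := by
  ext j k
  simp only [Matrix.mul_apply, transpose_apply, matSel, of_apply, Matrix.one_apply]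
  rw [Finset.sum_eq_single (U.orderEmbOfFin hU j)]
  · simp [EmbeddingLike.apply_eq_iff_eq, eq_comm]
  · intro i _ hi
    rw [if_neg hi, zero_mul]
  · intro h
    exact absurd (Finset.mem_univ _) h

lemma matSel_mul_t_apply {n μ : ℕ} (U : Finset (Fin n)) (hU : U.card = μ) (i k : Fin n) :
    (matSel F U hU * (matSel F U hU)ᵀ) i k = if i = k ∧ i ∈ U then 1 else 0 := by
  simp only [Matrix.mul_apply, transpose_apply, matSel, of_apply]
  by_cases hik : i = k
  · subst hik
    by_cases hiU : i ∈ U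
    · have hr : i ∈ Set.range (U.orderEmbOfFin hU) := by
        rw [Finset.range_orderEmbOfFin]; exact hiU
      obtain ⟨j₀, hj₀⟩ := hr
      rw [Finset.sum_eq_single j₀]
      · simp [hj₀.symm, hiU]
      · intro j _ hj
        have : i ≠ U.orderEmbOfFin hU j := by
          rw [← hj₀]
          exact fun h => hj ((U.orderEmbOfFin hU).injective h.symm)
        simp [this]
      · intro h
        exact absurd (Finset.mem_univ _) h
    · have : ∀ j : Fin μ, i ≠ U.orderEmbOfFin hU j := fun j h =>
        hiU (h ▸ Finset.orderEmbOfFin_mem U hU j)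
      simp [this, hiU]
  · refine Eq.trans (Finset.sum_eq_zero fun j _ => ?_) (by simp [hik])
    by_cases h1 : i = U.orderEmbOfFin hU j
    · have h2 : k ≠ U.orderEmbOfFin hU j := fun h => hik (h1.trans h.symm)
      simp [h2]
    · simp [h1]

lemma matSel_resolution {n μ ν : ℕ} (U : Finset (Fin n)) (hU : U.card = μ)
    (hUc : Uᶜ.card = ν) :
    matSel F U hU * (matSel F U hU)ᵀ + matSel F Uᶜ hUc * (matSel F Uᶜ hUc)ᵀ = 1 := by
  ext i k
  rw [Matrix.add_apply, matSel_mul_t_apply, matSel_mul_t_apply, Matrix.one_apply]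
  by_cases hik : i = k
  · subst hik
    by_cases hiU : i ∈ U <;> simp [hiU, Finset.mem_compl]
  · simp [hik]

end StmtAux

open StmtAux Module Submodule in
theorem stmt1 {F : Type*} [Field F] [Fintype F] {N n m μ' δ' : ℕ}
    (Y : Matrix (Fin N) (Fin n ⊕ Fin m) F)
    (U : Finset (Fin n)) (hU : U.card = μ')
    (r' : Matrix (Fin n) (Fin m) F) (L' : Matrix (Fin n) (Fin μ') F)
    (E' : Matrix (Fin δ') (Fin m) F)
    (h1 : (matSel F U hU)ᵀ * r' = 0)
    (h2 : (matSel F U hU)ᵀ * L' = -1)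
    (h3 : E'.rank = δ')
    (h4 : rowSpace (Matrix.fromBlocks (1 + L' * (matSel F U hU)ᵀ) r' 0 E') = rowSpace Y) :
    ∀ x : Matrix (Fin n) (Fin m) F,
      subDist (rowSpace (Matrix.fromCols (1 : Matrix (Fin n) (Fin n) F) x)) (rowSpace Y)
        = 2 * ((Matrix.fromBlocks L' (r' - x) 0 E').rank : ℤ) - (μ' : ℤ) - (δ' : ℤ) := by
  intro x
  classical
  set S : Matrix (Fin n) (Fin μ') F := matSel F U hU with hSdef
  have hμn : μ' ≤ n := by
    have h5 := Finset.card_le_univ U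
    simp only [Finset.card_univ, Fintype.card_fin] at h5
    omega
  have hcompl : Uᶜ.card = n - μ' := by
    have h5 := Finset.card_add_card_compl U
    simp only [Finset.card_univ, Fintype.card_fin] at h5
    omega
  set S2 : Matrix (Fin n) (Fin (n - μ')) F := matSel F Uᶜ hcompl with hS2def
  set P : Matrix (Fin n) (Fin n) F := 1 + L' * Sᵀ with hPdef
  set T : Matrix (Fin n) (Fin m) F := r' - x - L' * (Sᵀ * x) with hTdef
  have hSL : Sᵀ * L' = -1 := h2
  have hSr : Sᵀ * r' = 0 := h1
  have hSP : Sᵀ * P = 0 := by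
    rw [hPdef, Matrix.mul_add, Matrix.mul_one, ← Matrix.mul_assoc, hSL, Matrix.neg_mul,
      Matrix.one_mul, add_neg_cancel]
  have hAA : (L' * Sᵀ) * (L' * Sᵀ) = -(L' * Sᵀ) := by
    rw [Matrix.mul_assoc, ← Matrix.mul_assoc Sᵀ L' Sᵀ, hSL, Matrix.neg_mul, Matrix.one_mul,
      Matrix.mul_neg]
  have hPP : P * P = P := by
    rw [hPdef, Matrix.mul_add, Matrix.mul_one, Matrix.add_mul, Matrix.one_mul, hAA]
    abel
  have hST : Sᵀ * T = 0 := by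
    rw [hTdef, Matrix.mul_sub, Matrix.mul_sub, hSr, ← Matrix.mul_assoc, hSL, Matrix.neg_mul,
      Matrix.one_mul, zero_sub, sub_neg_eq_add, neg_add_cancel]
  have hSS2 : Sᵀ * S2 = 0 :=
    matSel_tmul_disjoint U Uᶜ hU hcompl (fun i hi => by simp [Finset.mem_compl, hi])
  have hPS2 : P * S2 = S2 := by
    rw [hPdef, Matrix.add_mul, Matrix.one_mul, Matrix.mul_assoc, hSS2, Matrix.mul_zero, add_zero]
  have hS2S2 : S2ᵀ * S2 = 1 := matSel_tmul_self Uᶜ hcompl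
  have hres : S * Sᵀ + S2 * S2ᵀ = 1 := matSel_resolution U hU hcompl
  set X : Matrix (Fin n) (Fin n ⊕ Fin m) F := fromCols 1 x with hXdef
  set M : Matrix (Fin n ⊕ Fin δ') (Fin n ⊕ Fin m) F := fromBlocks P r' 0 E' with hMdef
  set R1 : Matrix (Fin n ⊕ Fin m) (Fin n) F := fromRows 1 0 with hR1def
  set s : ℕ := finrank F (rowSpace (fromRows T E')) with hsdef
  have hXJ : X * fromRows (-x) (1 : Matrix (Fin m) (Fin m) F) = 0 := by
    rw [hXdef, Matrix.fromCols_mul_fromRows, Matrix.one_mul, Matrix.mul_one]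
    simp
  have f1 : finrank F (rowSpace X) = n := by
    have h := finrank_sup_fromCols_one x X
    rw [← hXdef, sup_idem, hXJ, rowSpace_zero, finrank_bot, add_zero] at h
    exact h
  have hMJ : M * fromRows (-x) (1 : Matrix (Fin m) (Fin m) F) = fromRows T E' := by
    have hcomp1 : P * (-x) + r' * (1 : Matrix (Fin m) (Fin m) F) = T := by
      rw [hPdef, hTdef, Matrix.mul_one, Matrix.add_mul, Matrix.one_mul, Matrix.mul_neg,
        Matrix.mul_assoc]
      abel
    have hcomp2 : (0 : Matrix (Fin δ') (Fin n) F) * (-x)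
        + E' * (1 : Matrix (Fin m) (Fin m) F) = E' := by simp
    rw [hMdef, Matrix.fromBlocks_mul_fromRows, hcomp1, hcomp2]
  have f3 : finrank F ↥(rowSpace X ⊔ rowSpace M) = n + s := by
    have h := finrank_sup_fromCols_one x M
    rw [← hXdef, hMJ, ← hsdef] at h
    exact h
  have hMR1 : M * R1 = fromRows P (0 : Matrix (Fin δ') (Fin n) F) := by
    rw [hMdef, hR1def, Matrix.fromBlocks_mul_fromRows]
    congr 1 <;> simp
  have hinf : rowSpace M ⊓ LinearMap.ker R1.vecMulLinear
      = rowSpace (fromCols (0 : Matrix (Fin δ') (Fin n) F) E') := by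
    apply le_antisymm
    · intro v hv
      rw [Submodule.mem_inf] at hv
      obtain ⟨hv1, hv2⟩ := hv
      obtain ⟨c, hc⟩ := mem_rowSpace_iff.mp hv1
      rw [LinearMap.mem_ker, Matrix.vecMulLinear_apply] at hv2
      have hcP : (c ∘ Sum.inl) ᵥ* P = 0 := by
        have h5 : c ᵥ* (M * R1) = 0 := by
          rw [← Matrix.vecMul_vecMul, hc]
          exact hv2
        rw [hMR1, ← Sum.elim_comp_inl_inr c, Matrix.sumElim_vecMul_fromRows,
          Matrix.vecMul_zero, add_zero] at h5
        exact h5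
      have hcr : (c ∘ Sum.inl) ᵥ* r' = 0 := by
        have ha : c ∘ Sum.inl = -((c ∘ Sum.inl) ᵥ* (L' * Sᵀ)) := by
          have h6 := hcP
          rw [hPdef, Matrix.vecMul_add, Matrix.vecMul_one] at h6
          exact eq_neg_of_add_eq_zero_left h6
        rw [ha, Matrix.neg_vecMul, Matrix.vecMul_vecMul, Matrix.mul_assoc, hSr,
          Matrix.mul_zero, Matrix.vecMul_zero, neg_zero]
      have hc' : v = Sum.elim ((c ∘ Sum.inl) ᵥ* P + (c ∘ Sum.inr) ᵥ* 0)
          ((c ∘ Sum.inl) ᵥ* r' + (c ∘ Sum.inr) ᵥ* E') := by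
        rw [← hc, hMdef, Matrix.vecMul_fromBlocks]
      rw [hcP, hcr, Matrix.vecMul_zero, add_zero, zero_add] at hc'
      rw [mem_rowSpace_iff]
      refine ⟨c ∘ Sum.inr, ?_⟩
      rw [Matrix.vecMul_fromCols, Matrix.vecMul_zero, hc']
    · apply le_inf
      · rw [show fromCols (0 : Matrix (Fin δ') (Fin n) F) E'
            = fromCols (0 : Matrix (Fin δ') (Fin n) F) (1 : Matrix (Fin δ') (Fin δ') F) * M by
          rw [hMdef, Matrix.fromCols_mul_fromBlocks]; simp]
        exact rowSpace_mul_le _ _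
      · intro v hv
        obtain ⟨d, hd⟩ := mem_rowSpace_iff.mp hv
        rw [LinearMap.mem_ker, Matrix.vecMulLinear_apply, ← hd, Matrix.vecMul_vecMul,
          hR1def, show fromCols (0 : Matrix (Fin δ') (Fin n) F) E'
              * fromRows (1 : Matrix (Fin n) (Fin n) F) (0 : Matrix (Fin m) (Fin n) F) = 0 by
            rw [Matrix.fromCols_mul_fromRows]; simp]
        exact Matrix.vecMul_zero d
  have hfC : finrank F (rowSpace (fromCols (0 : Matrix (Fin δ') (Fin n) F) E')) = δ' := by
    rw [show fromCols (0 : Matrix (Fin δ') (Fin n) F) E'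
        = E' * fromCols (0 : Matrix (Fin m) (Fin n) F) (1 : Matrix (Fin m) (Fin m) F) by
      rw [Matrix.mul_fromCols]; simp]
    rw [finrank_rowSpace_mul_eq E' _ (fromRows 0 1)
      (by rw [Matrix.fromCols_mul_fromRows]; simp)]
    exact (Matrix.rank_eq_finrank_span_row E').symm.trans h3
  have f2 : finrank F (rowSpace M) = δ' + (n - μ') := by
    have key := finrank_eq_inf_ker_add_map R1.vecMulLinear (rowSpace M)
    rw [hinf, hfC, ← rowSpace_mul, hMR1, rowSpace_fromRows, rowSpace_zero, sup_bot_eq,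
      finrank_rowSpace_proj P S S2 hres hS2S2 hSP hPP hPS2] at key
    exact key
  have hVV : (fromBlocks (1 : Matrix (Fin μ') (Fin μ') F) (-(Sᵀ * x)) 0
        (1 : Matrix (Fin m) (Fin m) F)) * fromBlocks 1 (Sᵀ * x) 0 1 = 1 := by
    rw [Matrix.fromBlocks_multiply]
    simp [Matrix.fromBlocks_one]
  have hBV : Matrix.fromBlocks L' (r' - x) 0 E'
        * fromBlocks (1 : Matrix (Fin μ') (Fin μ') F) (-(Sᵀ * x)) 0
          (1 : Matrix (Fin m) (Fin m) F)
      = fromBlocks L' T 0 E' := by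
    have hb1 : L' * (1 : Matrix (Fin μ') (Fin μ') F) + (r' - x) * (0 : Matrix (Fin m) (Fin μ') F) = L' := by simp
    have hb2 : L' * (-(Sᵀ * x)) + (r' - x) * (1 : Matrix (Fin m) (Fin m) F) = T := by
      rw [hTdef, Matrix.mul_one, Matrix.mul_neg]
      abel
    have hb3 : (0 : Matrix (Fin δ') (Fin μ') F) * (1 : Matrix (Fin μ') (Fin μ') F) + E' * (0 : Matrix (Fin m) (Fin μ') F) = 0 := by simp
    have hb4 : (0 : Matrix (Fin δ') (Fin μ') F) * (-(Sᵀ * x)) + E' * (1 : Matrix (Fin m) (Fin m) F) = E' := by simp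
    rw [Matrix.fromBlocks_multiply, hb1, hb2, hb3, hb4]
  have f4 : (Matrix.fromBlocks L' (r' - x) 0 E').rank = μ' + s := by
    have hr2 : (Matrix.fromBlocks L' (r' - x) 0 E').rank
        = finrank F (rowSpace (Matrix.fromBlocks L' (r' - x) 0 E')) :=
      Matrix.rank_eq_finrank_span_row _
    rw [hr2, ← finrank_rowSpace_mul_eq (Matrix.fromBlocks L' (r' - x) 0 E')
        (fromBlocks 1 (-(Sᵀ * x)) 0 1) (fromBlocks 1 (Sᵀ * x) 0 1) hVV, hBV,
      finrank_rowSpace_fromBlocks L' T E' S hSL hST, hsdef]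
  have f5 := Submodule.finrank_sup_add_finrank_inf_eq (rowSpace X) (rowSpace M)
  rw [← h4]
  show (finrank F ↥(rowSpace X) : ℤ) + (finrank F ↥(rowSpace M) : ℤ)
      - 2 * (finrank F ↥(rowSpace X ⊓ rowSpace M) : ℤ) = _
  rw [f4, f1, f2]
  omega
end

section
/- Let F be a field, and let r' ∈ F^{n×m}, L' ∈ F^{n×μ'}, U ⊆ {0,…,n−1} with |U| = μ' satisfy I_U^T r' = 0 and I_U^T L' = −I_{μ'}. Let E' ∈ F^{δ'×m} be arbitrary. Then for every x ∈ F^{n×m}, the rank of the (2n+δ')×(n+m) matrix obtained by vertically stacking [I_n | x], [I_n + L' I_U^T | r'], and [0 | E'] equals rank[[L' , r'−x],[0 , E']] + n − μ'. -/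
open Matrix

theorem stmt2 {F : Type*} [Field F] {n m μ' δ' : ℕ}
    (U : Finset (Fin n)) (hU : U.card = μ')
    (r' : Matrix (Fin n) (Fin m) F) (L' : Matrix (Fin n) (Fin μ') F)
    (h1 : (matSel F U hU)ᵀ * r' = 0)
    (h2 : (matSel F U hU)ᵀ * L' = -1)
    (E' : Matrix (Fin δ') (Fin m) F) :
    ∀ x : Matrix (Fin n) (Fin m) F,
      (Matrix.fromRows
          (Matrix.fromRows (Matrix.fromCols (1 : Matrix (Fin n) (Fin n) F) x)
            (Matrix.fromCols (1 + L' * (matSel F U hU)ᵀ) r'))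
          (Matrix.fromCols (0 : Matrix (Fin δ') (Fin n) F) E')).rank
        = (Matrix.fromBlocks L' (r' - x) 0 E').rank + n - μ' := by
  intro x
  classical
  set S : Matrix (Fin n) (Fin μ') F := matSel F U hU with hS
  set M := Matrix.fromRows
      (Matrix.fromRows (Matrix.fromCols (1 : Matrix (Fin n) (Fin n) F) x)
        (Matrix.fromCols (1 + L' * Sᵀ) r'))
      (Matrix.fromCols (0 : Matrix (Fin δ') (Fin n) F) E') with hM
  set N := Matrix.fromBlocks L' (r' - x) 0 E' with hN
  -- membership characterizations
  have hMmem : ∀ w : (Fin n ⊕ Fin m) → F, M *ᵥ w = 0 ↔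
      ((w ∘ Sum.inl) + x *ᵥ (w ∘ Sum.inr) = 0 ∧
       (1 + L' * Sᵀ) *ᵥ (w ∘ Sum.inl) + r' *ᵥ (w ∘ Sum.inr) = 0 ∧
       E' *ᵥ (w ∘ Sum.inr) = 0) := by
    intro w
    have hw : w = Sum.elim (w ∘ Sum.inl) (w ∘ Sum.inr) := (Sum.elim_comp_inl_inr w).symm
    have hc : ∀ {k : ℕ} (A : Matrix (Fin k) (Fin n) F) (B : Matrix (Fin k) (Fin m) F),
        Matrix.fromCols A B *ᵥ w = A *ᵥ (w ∘ Sum.inl) + B *ᵥ (w ∘ Sum.inr) := by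
      intro k A B
      conv_lhs => rw [hw]
      rw [Matrix.fromCols_mulVec_sumElim]
    have hcalc : M *ᵥ w =
        Sum.elim (Sum.elim ((w ∘ Sum.inl) + x *ᵥ (w ∘ Sum.inr))
            ((1 + L' * Sᵀ) *ᵥ (w ∘ Sum.inl) + r' *ᵥ (w ∘ Sum.inr)))
          (E' *ᵥ (w ∘ Sum.inr)) := by
      rw [hM, Matrix.fromRows_mulVec, Matrix.fromRows_mulVec, hc, hc, hc,
        Matrix.one_mulVec, Matrix.zero_mulVec, zero_add]
    rw [hcalc]
    constructor
    · intro h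
      exact ⟨funext fun i => congrFun h (Sum.inl (Sum.inl i)),
        funext fun i => congrFun h (Sum.inl (Sum.inr i)),
        funext fun i => congrFun h (Sum.inr i)⟩
    · rintro ⟨e1, e2, e3⟩
      funext j
      rcases j with (i | i) | i
      · exact congrFun e1 i
      · exact congrFun e2 i
      · exact congrFun e3 i
  have hNmem : ∀ z : (Fin μ' ⊕ Fin m) → F, N *ᵥ z = 0 ↔
      (L' *ᵥ (z ∘ Sum.inl) + (r' - x) *ᵥ (z ∘ Sum.inr) = 0 ∧
       E' *ᵥ (z ∘ Sum.inr) = 0) := by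
    intro z
    have hcalc : N *ᵥ z =
        Sum.elim (L' *ᵥ (z ∘ Sum.inl) + (r' - x) *ᵥ (z ∘ Sum.inr))
          (E' *ᵥ (z ∘ Sum.inr)) := by
      simp [hN, Matrix.fromBlocks_mulVec, Matrix.zero_mulVec]
    rw [hcalc]
    constructor
    · intro h
      exact ⟨funext fun i => congrFun h (Sum.inl i), funext fun i => congrFun h (Sum.inr i)⟩
    · rintro ⟨e1, e2⟩
      funext j
      rcases j with i | i
      · exact congrFun e1 i
      · exact congrFun e2 i
  -- the derived equation for kernel elements of N
  have hNa : ∀ z : (Fin μ' ⊕ Fin m) → F, N *ᵥ z = 0 →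
      (z ∘ Sum.inl) = -((Sᵀ * x) *ᵥ (z ∘ Sum.inr)) := by
    intro z hz
    obtain ⟨f1, _⟩ := (hNmem z).1 hz
    have := congrArg (fun v => Sᵀ *ᵥ v) f1
    simp only [Matrix.mulVec_add, Matrix.mulVec_mulVec, Matrix.mulVec_zero] at this
    rw [h2, Matrix.mul_sub] at this
    rw [h1] at this
    simp only [Matrix.neg_mulVec, Matrix.one_mulVec, Matrix.sub_mulVec,
      Matrix.zero_mulVec, zero_sub, Matrix.neg_mulVec] at this
    funext i
    have h := congrFun this i
    simp only [Pi.add_apply, Pi.neg_apply, Pi.zero_apply, Function.comp_apply] at h ⊢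
    linear_combination -h
  -- the two transfer matrices
  set Φ : Matrix (Fin μ' ⊕ Fin m) (Fin n ⊕ Fin m) F := Matrix.fromBlocks 0 (-(Sᵀ * x)) 0 1
    with hΦdef
  set Ψ : Matrix (Fin n ⊕ Fin m) (Fin μ' ⊕ Fin m) F := Matrix.fromBlocks 0 (-x) 0 1 with hΨdef
  have hΦ : ∀ w : (Fin n ⊕ Fin m) → F,
      Φ *ᵥ w = Sum.elim (-((Sᵀ * x) *ᵥ (w ∘ Sum.inr))) (w ∘ Sum.inr) := by
    intro w
    simp [hΦdef, Matrix.fromBlocks_mulVec, Matrix.zero_mulVec, Matrix.one_mulVec,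
      Matrix.neg_mulVec]
  have hΨ : ∀ z : (Fin μ' ⊕ Fin m) → F,
      Ψ *ᵥ z = Sum.elim (-(x *ᵥ (z ∘ Sum.inr))) (z ∘ Sum.inr) := by
    intro z
    simp [hΨdef, Matrix.fromBlocks_mulVec, Matrix.zero_mulVec, Matrix.one_mulVec,
      Matrix.neg_mulVec]
  -- forward map
  have hf : ∀ w : (Fin n ⊕ Fin m) → F, M *ᵥ w = 0 → N *ᵥ (Φ *ᵥ w) = 0 := by
    intro w hw
    obtain ⟨e1, e2, e3⟩ := (hMmem w).1 hw
    rw [hΦ w, hNmem]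
    have hu : (w ∘ Sum.inl) = -(x *ᵥ (w ∘ Sum.inr)) := eq_neg_of_add_eq_zero_left e1
    rw [hu] at e2
    constructor
    · show L' *ᵥ (-((Sᵀ * x) *ᵥ (w ∘ Sum.inr))) + (r' - x) *ᵥ (w ∘ Sum.inr) = 0
      simp only [Matrix.add_mulVec, Matrix.one_mulVec, Matrix.mulVec_neg,
        Matrix.mulVec_mulVec, Matrix.sub_mulVec, Matrix.add_mul, Matrix.one_mul,
        ← Matrix.mul_assoc] at e2 ⊢
      linear_combination e2
    · exact e3
  -- backward map
  have hg : ∀ z : (Fin μ' ⊕ Fin m) → F, N *ᵥ z = 0 → M *ᵥ (Ψ *ᵥ z) = 0 := by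
    intro z hz
    obtain ⟨f1, f2⟩ := (hNmem z).1 hz
    have ha := hNa z hz
    rw [ha] at f1
    rw [hΨ z, hMmem]
    refine ⟨?_, ?_, ?_⟩
    · show -(x *ᵥ (z ∘ Sum.inr)) + x *ᵥ (z ∘ Sum.inr) = 0
      simp
    · show (1 + L' * Sᵀ) *ᵥ (-(x *ᵥ (z ∘ Sum.inr))) + r' *ᵥ (z ∘ Sum.inr) = 0
      simp only [Matrix.add_mulVec, Matrix.one_mulVec, Matrix.mulVec_neg,
        Matrix.mulVec_mulVec, Matrix.sub_mulVec, Matrix.add_mul, Matrix.one_mul,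
        ← Matrix.mul_assoc] at f1 ⊢
      linear_combination f1
    · exact f2
  -- mutual inverses on kernels
  have hgf : ∀ w : (Fin n ⊕ Fin m) → F, M *ᵥ w = 0 → Ψ *ᵥ (Φ *ᵥ w) = w := by
    intro w hw
    obtain ⟨e1, _, _⟩ := (hMmem w).1 hw
    have hu : (w ∘ Sum.inl) = -(x *ᵥ (w ∘ Sum.inr)) := eq_neg_of_add_eq_zero_left e1
    rw [hΦ w, hΨ]
    funext j
    rcases j with i | i
    · exact (congrFun hu i).symm
    · rfl
  have hfg : ∀ z : (Fin μ' ⊕ Fin m) → F, N *ᵥ z = 0 → Φ *ᵥ (Ψ *ᵥ z) = z := by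
    intro z hz
    have ha := hNa z hz
    rw [hΨ z, hΦ]
    funext j
    rcases j with i | i
    · exact (congrFun ha i).symm
    · rfl
  -- equal nullities
  have hker : Module.finrank F (LinearMap.ker M.mulVecLin)
      = Module.finrank F (LinearMap.ker N.mulVecLin) := by
    have memM : ∀ w : ↥(LinearMap.ker M.mulVecLin), M *ᵥ (w : (Fin n ⊕ Fin m) → F) = 0 := by
      intro w
      have h := LinearMap.mem_ker.mp w.2
      rwa [Matrix.mulVecLin_apply] at h
    have memN : ∀ z : ↥(LinearMap.ker N.mulVecLin), N *ᵥ (z : (Fin μ' ⊕ Fin m) → F) = 0 := by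
      intro z
      have h := LinearMap.mem_ker.mp z.2
      rwa [Matrix.mulVecLin_apply] at h
    refine LinearEquiv.finrank_eq
      { toFun := fun w => ⟨Φ *ᵥ w.1, LinearMap.mem_ker.mpr (by
          rw [Matrix.mulVecLin_apply]
          exact hf w.1 (memM w))⟩
        invFun := fun z => ⟨Ψ *ᵥ z.1, LinearMap.mem_ker.mpr (by
          rw [Matrix.mulVecLin_apply]
          exact hg z.1 (memN z))⟩
        map_add' := fun w₁ w₂ => by
          ext j
          simp [Matrix.mulVec_add]
        map_smul' := fun c w => by
          ext j
          simp [Matrix.mulVec_smul]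
        left_inv := fun w => Subtype.ext (hgf w.1 (memM w))
        right_inv := fun z => Subtype.ext (hfg z.1 (memN z)) }
  -- rank–nullity for both matrices
  have rM : M.rank + Module.finrank F (LinearMap.ker M.mulVecLin) = n + m := by
    have h := LinearMap.finrank_range_add_finrank_ker M.mulVecLin
    rw [Module.finrank_fintype_fun_eq_card, Fintype.card_sum, Fintype.card_fin,
      Fintype.card_fin] at h
    exact h
  have rN : N.rank + Module.finrank F (LinearMap.ker N.mulVecLin) = μ' + m := by
    have h := LinearMap.finrank_range_add_finrank_ker N.mulVecLin
    rw [Module.finrank_fintype_fun_eq_card, Fintype.card_sum, Fintype.card_fin,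
      Fintype.card_fin] at h
    exact h
  have hμn : μ' ≤ n := by
    have := Finset.card_le_univ U
    simpa [hU] using this
  omega
end

section
/- Let F be a field, and let r' ∈ F^{n×m}, L' ∈ F^{n×μ'}, E' ∈ F^{δ'×m}, U ⊆ {0,…,n−1} with |U| = μ' satisfy I_U^T r' = 0 and I_U^T L' = −I_{μ'}. Then the rank of the (n+δ')×(n+m) block matrix [[I_n + L' I_U^T , r'],[0 , E']] equals (n − μ') + rank E'. In particular, if rank E' = δ', this rank equals n − μ' + δ'. -/
open Matrix

/-- A product of submodules is equivalent to the product of the submodules. -/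
def mySubmoduleProdEquiv {R M N : Type*} [Ring R] [AddCommGroup M] [AddCommGroup N]
    [Module R M] [Module R N] (p : Submodule R M) (q : Submodule R N) :
    (p.prod q) ≃ₗ[R] p × q where
  toFun x := (⟨x.1.1, x.2.1⟩, ⟨x.1.2, x.2.2⟩)
  invFun y := ⟨(y.1.1, y.2.1), ⟨y.1.2, y.2.2⟩⟩
  left_inv _ := rfl
  right_inv _ := rfl
  map_add' _ _ := rfl
  map_smul' _ _ := rfl

lemma my_finrank_prod {F M N : Type*} [Field F] [AddCommGroup M] [AddCommGroup N]
    [Module F M] [Module F N] [FiniteDimensional F M] [FiniteDimensional F N]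
    (p : Submodule F M) (q : Submodule F N) :
    Module.finrank F (p.prod q) = Module.finrank F p + Module.finrank F q := by
  rw [(mySubmoduleProdEquiv p q).finrank_eq, Module.finrank_prod]

lemma rank_fromBlocks_diag {F : Type*} [Field F] {a b c d : Type*}
    [Fintype a] [Fintype b] [Fintype c] [Fintype d]
    (A : Matrix a b F) (D : Matrix c d F) :
    (fromBlocks A 0 0 D).rank = A.rank + D.rank := by
  classical
  let e : ((a ⊕ c) → F) ≃ₗ[F] (a → F) × (c → F) := LinearEquiv.sumArrowLequivProdArrow a c F F
  have hmap : Submodule.map (e : ((a ⊕ c) → F) →ₗ[F] (a → F) × (c → F)) (LinearMap.range (fromBlocks A 0 0 D).mulVecLin)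
      = (LinearMap.range A.mulVecLin).prod (LinearMap.range D.mulVecLin) := by
    ext uv
    simp only [Submodule.mem_map, LinearMap.mem_range, Submodule.mem_prod, mulVecLin_apply]
    constructor
    · rintro ⟨w, ⟨x, rfl⟩, rfl⟩
      constructor
      · exact ⟨x ∘ Sum.inl, by
          funext i
          simp [e, LinearEquiv.sumArrowLequivProdArrow, fromBlocks_mulVec, zero_mulVec]⟩
      · exact ⟨x ∘ Sum.inr, by
          funext i
          simp [e, LinearEquiv.sumArrowLequivProdArrow, fromBlocks_mulVec, zero_mulVec]⟩
    · rintro ⟨⟨x, hx⟩, ⟨y, hy⟩⟩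
      refine ⟨(fromBlocks A 0 0 D).mulVec (Sum.elim x y), ⟨Sum.elim x y, rfl⟩, ?_⟩
      have : uv = (A.mulVec x, D.mulVec y) := by
        rw [hx, hy]
      rw [this]
      ext i <;>
        simp [e, LinearEquiv.sumArrowLequivProdArrow, fromBlocks_mulVec, zero_mulVec]
  calc (fromBlocks A 0 0 D).rank
      = Module.finrank F (Submodule.map (e : ((a ⊕ c) → F) →ₗ[F] (a → F) × (c → F)) (LinearMap.range (fromBlocks A 0 0 D).mulVecLin)) :=
        (LinearEquiv.finrank_map_eq e _).symm
    _ = Module.finrank F ((LinearMap.range A.mulVecLin).prod (LinearMap.range D.mulVecLin)) := by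
        rw [hmap]
    _ = A.rank + D.rank := my_finrank_prod _ _

theorem stmt4 {F : Type*} [Field F] {n m μ' δ' : ℕ}
    (U : Finset (Fin n)) (hU : U.card = μ')
    (r' : Matrix (Fin n) (Fin m) F) (L' : Matrix (Fin n) (Fin μ') F)
    (E' : Matrix (Fin δ') (Fin m) F)
    (h1 : (matSel F U hU)ᵀ * r' = 0)
    (h2 : (matSel F U hU)ᵀ * L' = -1) :
    (Matrix.fromBlocks (1 + L' * (matSel F U hU)ᵀ) r' 0 E').rank
        = (n - μ') + E'.rank ∧
      (E'.rank = δ' →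
        (Matrix.fromBlocks (1 + L' * (matSel F U hU)ᵀ) r' 0 E').rank = n - μ' + δ') := by
  classical
  set S : Matrix (Fin n) (Fin μ') F := matSel F U hU with hS
  set P : Matrix (Fin n) (Fin n) F := 1 + L' * Sᵀ with hP
  -- Sᵀ * S = 1
  have hSS : Sᵀ * S = (1 : Matrix (Fin μ') (Fin μ') F) := by
    ext j k
    simp only [Matrix.mul_apply, transpose_apply, hS, matSel, Matrix.of_apply]
    rw [Finset.sum_eq_single (U.orderEmbOfFin hU j)]
    · simp [Matrix.one_apply, (U.orderEmbOfFin hU).injective.eq_iff, eq_comm]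
    · intro i _ hi
      simp [hi]
    · simp
  -- rank of L' * Sᵀ is μ'
  have hLrank : ((-(L' * Sᵀ)) : Matrix (Fin n) (Fin n) F).rank = μ' := by
    apply le_antisymm
    · have : (-(L' * Sᵀ)) = (-L') * Sᵀ := by rw [Matrix.neg_mul]
      rw [this]
      calc ((-L') * Sᵀ).rank ≤ (-L').rank := rank_mul_le_left _ _
        _ ≤ μ' := by simpa using (-L').rank_le_card_width
    · have key : Sᵀ * (-(L' * Sᵀ)) * S = (1 : Matrix (Fin μ') (Fin μ') F) := by
        rw [Matrix.mul_neg, ← Matrix.mul_assoc, h2]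
        simp [Matrix.neg_mul, Matrix.one_mul, hSS]
      have h1' : (Sᵀ * (-(L' * Sᵀ)) * S).rank = μ' := by rw [key]; simp
      calc μ' = (Sᵀ * (-(L' * Sᵀ)) * S).rank := h1'.symm
        _ ≤ (Sᵀ * (-(L' * Sᵀ))).rank := rank_mul_le_left _ _
        _ ≤ (-(L' * Sᵀ)).rank := rank_mul_le_right _ _
  -- P is idempotent
  have hPP : P * P = P := by
    have key : (L' * Sᵀ) * (L' * Sᵀ) = -(L' * Sᵀ) := by
      calc (L' * Sᵀ) * (L' * Sᵀ) = L' * (Sᵀ * L') * Sᵀ := by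
            rw [Matrix.mul_assoc, Matrix.mul_assoc, Matrix.mul_assoc]
        _ = -(L' * Sᵀ) := by rw [h2, Matrix.mul_neg, Matrix.mul_one, Matrix.neg_mul]
    rw [hP, add_mul, mul_add, mul_add, Matrix.one_mul, Matrix.one_mul, Matrix.mul_one, key]
    abel
  -- P * r' = r'
  have hPr : P * r' = r' := by
    rw [hP, Matrix.add_mul, Matrix.one_mul, Matrix.mul_assoc, h1, Matrix.mul_zero, add_zero]
  -- rank P = n - μ'
  have hμn : μ' ≤ n := by
    rw [← hU]
    simpa using Finset.card_le_card (Finset.subset_univ U)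
  have hrankP : P.rank = n - μ' := by
    have hrn := LinearMap.finrank_range_add_finrank_ker P.mulVecLin
    have hker : LinearMap.ker P.mulVecLin = LinearMap.range (-(L' * Sᵀ)).mulVecLin := by
      have h1P : (-(L' * Sᵀ)) = 1 - P := by rw [hP]; abel
      ext x
      simp only [LinearMap.mem_ker, LinearMap.mem_range, mulVecLin_apply]
      constructor
      · intro hx
        refine ⟨x, ?_⟩
        rw [h1P, Matrix.sub_mulVec, Matrix.one_mulVec, hx, sub_zero]
      · rintro ⟨y, rfl⟩
        rw [Matrix.mulVec_mulVec]
        have hz : P * (1 - P) = 0 := by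
          rw [Matrix.mul_sub, Matrix.mul_one, hPP, sub_self]
        rw [← h1P] at hz
        rw [hz, Matrix.zero_mulVec]
    have hkerrank : Module.finrank F (LinearMap.ker P.mulVecLin) = μ' := by
      rw [hker]
      exact hLrank
    have hcard : Module.finrank F (Fin n → F) = n := by simp
    rw [hkerrank, hcard] at hrn
    have : P.rank = Module.finrank F (LinearMap.range P.mulVecLin) := rfl
    omega
  -- column operation
  have hmain : (Matrix.fromBlocks P r' 0 E').rank = (n - μ') + E'.rank := by
    have hMC : Matrix.fromBlocks P r' 0 E' *
        Matrix.fromBlocks (1 : Matrix (Fin n) (Fin n) F) (-r') 0 (1 : Matrix (Fin m) (Fin m) F)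
        = Matrix.fromBlocks P 0 0 E' := by
      rw [Matrix.fromBlocks_multiply]
      simp [Matrix.mul_neg, hPr]
    have hdet : IsUnit (Matrix.fromBlocks (1 : Matrix (Fin n) (Fin n) F) (-r') 0
        (1 : Matrix (Fin m) (Fin m) F)).det := by
      rw [Matrix.det_fromBlocks_zero₂₁]
      simp
    rw [← rank_mul_eq_left_of_isUnit_det _ _ hdet, hMC, rank_fromBlocks_diag, hrankP]
  refine ⟨hmain, fun hE => ?_⟩
  rw [hmain, hE]
end

section
/- Let F be a field of characteristic 2, let p ≥ 0, and let w_0, …, w_{p−1} ∈ F be linearly independent over the prime field F_2 (equivalently, the sum of every nonempty subset of {w_0,…,w_{p−1}} is nonzero). Define polynomials f_i ∈ F[X] recursively by f_0 = X and f_{i+1} = f_i² + f_i(w_i) · f_i, where f_i(w_i) denotes the evaluation of f_i at w_i. Then f_i(w_i) ≠ 0 for every i < p, and the set of roots of f_p in F, {x ∈ F : f_p(x) = 0}, equals the F_2-span of {w_0, …, w_{p−1}}, i.e., the set of all sums Σ_{i∈S} w_i over subsets S ⊆ {0,…,p−1}. -/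
/-- The recursively defined linearized polynomials: `f 0 = X` and
`f (i+1) = (f i)^2 + f i (w i) • f i`. -/
noncomputable def fseq {F : Type*} [CommRing F] (w : ℕ → F) : ℕ → Polynomial F
  | 0 => Polynomial.X
  | i + 1 => fseq w i ^ 2 + Polynomial.C ((fseq w i).eval (w i)) * fseq w i

lemma fseq_eval_add {F : Type*} [Field F] [CharP F 2] (w : ℕ → F) (i : ℕ) (x y : F) :
    (fseq w i).eval (x + y) = (fseq w i).eval x + (fseq w i).eval y := by
  induction i with
  | zero => simp [fseq]
  | succ i ih =>
    have : Fact (Nat.Prime 2) := ⟨Nat.prime_two⟩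
    simp only [fseq, Polynomial.eval_add, Polynomial.eval_pow, Polynomial.eval_mul,
      Polynomial.eval_C, ih]
    rw [add_pow_char]
    ring

lemma fseq_aux {F : Type*} [Field F] [CharP F 2] (w : ℕ → F) (p : ℕ)
    (hw : ∀ S : Finset ℕ, (∀ i ∈ S, i < p) → S.Nonempty → ∑ i ∈ S, w i ≠ 0) :
    (∀ i < p, (fseq w i).eval (w i) ≠ 0) ∧
    {x : F | (fseq w p).eval x = 0}
      = {x : F | ∃ S : Finset ℕ, (∀ i ∈ S, i < p) ∧ x = ∑ i ∈ S, w i} := by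
  induction p with
  | zero =>
    refine ⟨fun i hi => absurd hi (Nat.not_lt_zero i), ?_⟩
    ext x
    simp only [Set.mem_setOf_eq, fseq, Polynomial.eval_X]
    constructor
    · intro hx; exact ⟨∅, by simp, by simp [hx]⟩
    · rintro ⟨S, hS, rfl⟩
      have : S = ∅ := Finset.eq_empty_of_forall_notMem fun i hi => by
        exact absurd (hS i hi) (Nat.not_lt_zero i)
      simp [this]
  | succ p ih =>
    have hw' : ∀ S : Finset ℕ, (∀ i ∈ S, i < p) → S.Nonempty → ∑ i ∈ S, w i ≠ 0 :=
      fun S h => hw S (fun i hi => Nat.lt_succ_of_lt (h i hi))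
    obtain ⟨H1, H2⟩ := ih hw'
    have hc : (fseq w p).eval (w p) ≠ 0 := by
      intro h0
      have hmem : w p ∈ {x : F | (fseq w p).eval x = 0} := h0
      rw [H2] at hmem
      obtain ⟨S, hS, hsum⟩ := hmem
      have hp : p ∉ S := fun h => absurd (hS p h) (lt_irrefl p)
      refine hw (insert p S) ?_ ⟨p, Finset.mem_insert_self p S⟩ ?_
      · intro i hi
        rcases Finset.mem_insert.mp hi with h | hi
        · omega
        · exact Nat.lt_succ_of_lt (hS i hi)
      · rw [Finset.sum_insert hp, ← hsum]
        exact CharTwo.add_self_eq_zero (w p)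
    refine ⟨?_, ?_⟩
    · intro i hi
      rcases Nat.lt_succ_iff_lt_or_eq.mp hi with h | rfl
      · exact H1 i h
      · exact hc
    · ext x
      simp only [Set.mem_setOf_eq]
      have heval : ∀ y : F, (fseq w (p + 1)).eval y
          = (fseq w p).eval y * ((fseq w p).eval y + (fseq w p).eval (w p)) := by
        intro y
        show (fseq w p ^ 2 + Polynomial.C ((fseq w p).eval (w p)) * fseq w p).eval y = _
        simp only [Polynomial.eval_add, Polynomial.eval_pow, Polynomial.eval_mul,
          Polynomial.eval_C]
        ring
      constructor
      · intro hx
        rw [heval, mul_eq_zero] at hx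
        rcases hx with h | h
        · have hmem : x ∈ {x : F | (fseq w p).eval x = 0} := h
          rw [H2] at hmem
          obtain ⟨S, hS, rfl⟩ := hmem
          exact ⟨S, fun i hi => Nat.lt_succ_of_lt (hS i hi), rfl⟩
        · have hxr : (fseq w p).eval (x + w p) = 0 := by
            rw [fseq_eval_add]; exact h
          have hmem : x + w p ∈ {x : F | (fseq w p).eval x = 0} := hxr
          rw [H2] at hmem
          obtain ⟨S, hS, hsum⟩ := hmem
          have hp : p ∉ S := fun h => absurd (hS p h) (lt_irrefl p)
          refine ⟨insert p S, ?_, ?_⟩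
          · intro i hi
            rcases Finset.mem_insert.mp hi with h | hi
            · omega
            · exact Nat.lt_succ_of_lt (hS i hi)
          · rw [Finset.sum_insert hp, ← hsum]
            linear_combination -CharTwo.add_self_eq_zero (w p)
      · rintro ⟨S, hS, rfl⟩
        by_cases hp : p ∈ S
        · have hsplit : ∑ i ∈ S, w i = w p + ∑ i ∈ S.erase p, w i :=
            (Finset.add_sum_erase _ _ hp).symm
          have hroot : (fseq w p).eval (∑ i ∈ S.erase p, w i) = 0 := by
            have : (∑ i ∈ S.erase p, w i) ∈
                {x : F | ∃ S : Finset ℕ, (∀ i ∈ S, i < p) ∧ x = ∑ i ∈ S, w i} := by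
              refine ⟨S.erase p, fun i hi => ?_, rfl⟩
              have h1 := Finset.mem_erase.mp hi
              have h2 := hS i h1.2
              omega
            rw [← H2] at this
            exact this
          rw [heval, hsplit, fseq_eval_add, hroot, add_zero,
            CharTwo.add_self_eq_zero, mul_zero]
        · have hroot : (fseq w p).eval (∑ i ∈ S, w i) = 0 := by
            have : (∑ i ∈ S, w i) ∈
                {x : F | ∃ S : Finset ℕ, (∀ i ∈ S, i < p) ∧ x = ∑ i ∈ S, w i} := by
              refine ⟨S, fun i hi => ?_, rfl⟩
              have h2 := hS i hi
              have : i ≠ p := fun h => hp (h ▸ hi)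
              omega
            rw [← H2] at this
            exact this
          rw [heval, hroot, zero_mul]

lemma sum_attachFin {M : Type*} [AddCommMonoid M] (f : ℕ → M) {n : ℕ} (S : Finset ℕ)
    (h : ∀ m ∈ S, m < n) : ∑ i ∈ S.attachFin h, f (i : ℕ) = ∑ i ∈ S, f i := by
  apply Finset.sum_bij (fun (a : Fin n) (_ : a ∈ S.attachFin h) => (a : ℕ))
  · intro a ha; exact (Finset.mem_attachFin h).mp ha
  · intro a ha b hb hab; exact Fin.val_injective hab
  · intro b hb; exact ⟨⟨b, h b hb⟩, (Finset.mem_attachFin h).mpr hb, rfl⟩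
  · intro a ha; rfl

theorem stmt10 {F : Type*} [Field F] [CharP F 2] (p : ℕ) (w : ℕ → F)
    (hw : ∀ S : Finset (Fin p), S.Nonempty → ∑ i ∈ S, w (i : ℕ) ≠ 0) :
    (∀ i < p, (fseq w i).eval (w i) ≠ 0) ∧
    {x : F | (fseq w p).eval x = 0}
      = {x : F | ∃ S : Finset (Fin p), x = ∑ i ∈ S, w (i : ℕ)} := by
  have hw' : ∀ S : Finset ℕ, (∀ i ∈ S, i < p) → S.Nonempty → ∑ i ∈ S, w i ≠ 0 := by
    intro S h hne
    obtain ⟨a, ha⟩ := hne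
    have hsum : ∑ i ∈ S.attachFin h, w (i : ℕ) = ∑ i ∈ S, w i := sum_attachFin w S h
    rw [← hsum]
    exact hw (S.attachFin h) ⟨⟨a, h a ha⟩, (Finset.mem_attachFin h).mpr ha⟩
  obtain ⟨H1, H2⟩ := fseq_aux w p hw'
  refine ⟨H1, ?_⟩
  rw [H2]
  ext x
  simp only [Set.mem_setOf_eq]
  constructor
  · rintro ⟨S, hS, rfl⟩
    exact ⟨S.attachFin hS, (sum_attachFin w S hS).symm⟩
  · rintro ⟨S, rfl⟩
    refine ⟨S.map Fin.valEmbedding, fun i hi => ?_, ?_⟩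
    · obtain ⟨j, _, rfl⟩ := Finset.mem_map.mp hi
      exact j.isLt
    · rw [Finset.sum_map]
      rfl
end
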